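/- Let n ≥ 2, 0 < θ ≤ π, and d ≥ 1. Let P_1, …, P_d : ℝ → ℝ satisfy P_k(1) = 1 and the positivity property: for every finite C ⊂ S^{n-1}, Σ_{(c,c') ∈ C×C} P_k(⟨c,c'⟩) ≥ 0. For k = 0, …, d, let m_k ≥ 1 and let S_k : ℝ³ → (symmetric m_k × m_k real matrices) be functions invariant under all permutations of their three arguments, satisfying: for every finite C ⊂ S^{n-1}, Σ_{(c,c',c'') ∈ C×C×C} S_k(⟨c,c'⟩, ⟨c,c''⟩, ⟨c',c''⟩) is positive semidefinite, and such that S_k(1,1,1) = 0 for k = 1, …, d. Suppose real numbers b₁₁, b₁₂, b₂₂ with the 2×2 matrix [[b₁₁, b₁₂],[b₁₂, b₂₂]] positive semidefinite, reals a_1, …, a_d ≥ 0, and positive semidefinite matrices F_0, …, F_d (F_k of size m_k) satisfy: (i) for all u ∈ [−1, cos θ]: Σ_{k=1}^d a_k P_k(u) + 2b₁₂ + b₂₂ + 3 Σ_{k=0}^d ⟨F_k, S_k(u,u,1)⟩ ≤ −1; and (ii) for all (u,v,t) with −1 ≤ u,v,t ≤ cos θ and 1 + 2uvt − u² − v² −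 t² ≥ 0: b₂₂ + Σ_{k=0}^d ⟨F_k, S_k(u,v,t)⟩ ≤ 0. Then every finite C ⊂ S^{n-1} with ⟨c,c'⟩ ≤ cos θ for all distinct c, c' ∈ C satisfies card(C) ≤ 1 + Σ_{k=1}^d a_k + b₁₁ + ⟨F_0, S_0(1,1,1)⟩. -/

import Mathlib

open scoped RealInnerProductSpace

lemma sdp_trace_mul_nonneg {m : ℕ} {A B : Matrix (Fin m) (Fin m) ℝ}
    (hA : A.PosSemidef) (hB : B.PosSemidef) : 0 ≤ (A * B).trace := by
  obtain ⟨D, hD⟩ : ∃ D : Matrix (Fin m) (Fin m) ℝ, B = D.conjTranspose * D := by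
    open scoped MatrixOrder in
    obtain ⟨X, hX, -, hXB⟩ :=
      sub_zero B ▸ CFC.exists_sqrt_of_isSelfAdjoint_of_quasispectrumRestricts hB.isHermitian
        (QuasispectrumRestricts.nnreal_of_nonneg hB.nonneg)
    have hXh : X.conjTranspose = X := hX.star_eq
    exact ⟨X, by rw [hXh, hXB, sub_zero]⟩
  have h1 : (A * B).trace = (D * A * D.conjTranspose).trace := by
    rw [hD, ← Matrix.mul_assoc, Matrix.trace_mul_cycle]
  rw [h1]
  have h2 : (D * A * D.conjTranspose).PosSemidef := hA.mul_mul_conjTranspose_same D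
  have h3 : ∀ i, 0 ≤ (D * A * D.conjTranspose) i i := by
    intro i
    simpa using h2.dotProduct_mulVec_nonneg (Pi.single i 1)
  exact Finset.sum_nonneg fun i _ => h3 i

lemma sdp_gram3_nonneg {E : Type*} [NormedAddCommGroup E] [InnerProductSpace ℝ E]
    {x y z : E} (hx : ⟪x, x⟫ = (1:ℝ)) (hy : ⟪y, y⟫ = (1:ℝ)) (hz : ⟪z, z⟫ = (1:ℝ)) :
    0 ≤ 1 + 2 * ⟪x, y⟫ * ⟪x, z⟫ * ⟪y, z⟫ - ⟪x, y⟫ ^ 2 - ⟪x, z⟫ ^ 2 - ⟪y, z⟫ ^ 2 := by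
  have hnx : ‖x‖ = 1 := by
    have h := hx; rw [real_inner_self_eq_norm_mul_norm] at h
    nlinarith [norm_nonneg x]
  have hny : ‖y‖ = 1 := by
    have h := hy; rw [real_inner_self_eq_norm_mul_norm] at h
    nlinarith [norm_nonneg y]
  set u := ⟪x, y⟫ with hu
  set v := ⟪x, z⟫ with hv
  set t := ⟪y, z⟫ with ht
  have hyx : ⟪y, x⟫ = u := (real_inner_comm x y).symm ▸ rfl
  have hzx : ⟪z, x⟫ = v := (real_inner_comm x z).symm ▸ rfl
  have hzy : ⟪z, y⟫ = t := (real_inner_comm y z).symm ▸ rfl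
  have habs : |u| ≤ 1 := by
    have h := abs_real_inner_le_norm x y
    rwa [hnx, hny, one_mul] at h
  have key : (1 - u^2) * (1 + 2*u*v*t - u^2 - v^2 - t^2)
      = ⟪(1-u^2) • z - (v-u*t) • x - (t-u*v) • y, (1-u^2) • z - (v-u*t) • x - (t-u*v) • y⟫ := by
    simp only [inner_sub_left, inner_sub_right, real_inner_smul_left, real_inner_smul_right,
      hx, hy, hz, hyx, hzx, hzy, ← hu, ← hv, ← ht]
    ring
  rcases lt_or_ge (u^2) 1 with h1 | h1
  · nlinarith [real_inner_self_nonneg (x := (1-u^2) • z - (v-u*t) • x - (t-u*v) • y), key]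
  · have hu2 : u^2 = 1 := le_antisymm (by nlinarith [sq_abs u, abs_nonneg u]) h1
    have hcase : u = 1 ∨ u = -1 := by
      rcases mul_eq_zero.mp (show (u - 1) * (u + 1) = 0 by linear_combination hu2) with h | h
      · exact Or.inl (by linarith)
      · exact Or.inr (by linarith)
    rcases hcase with h | h
    · have hxy : x = y := (inner_eq_one_iff_of_norm_eq_one (𝕜 := ℝ) hnx hny).mp (by rw [← hu, h])
      have : t = v := by rw [ht, hv, hxy]
      rw [h, this]; ring_nf; nlinarith []
    · have hxy : x = -y := by
        have h2 : ⟪x, -y⟫ = (1:ℝ) := by rw [inner_neg_right, ← hu, h]; ring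
        exact (inner_eq_one_iff_of_norm_eq_one (𝕜 := ℝ) hnx (by rw [norm_neg]; exact hny)).mp h2
      have : v = -t := by rw [hv, ht, hxy, inner_neg_left]
      rw [h, this]; ring_nf; nlinarith []

set_option maxHeartbeats 1600000 in
theorem sdp_dual_bound (n : ℕ) (hn : 2 ≤ n) (θ : ℝ) (hθ0 : 0 < θ) (hθπ : θ ≤ Real.pi)
    (d : ℕ) (hd : 1 ≤ d)
    (P : ℕ → ℝ → ℝ)
    (hP1 : ∀ k, 1 ≤ k → k ≤ d → P k 1 = 1)
    (hPpos : ∀ k, 1 ≤ k → k ≤ d → ∀ C : Finset (EuclideanSpace ℝ (Fin n)),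
      (∀ c ∈ C, ⟪c, c⟫ = (1 : ℝ)) → 0 ≤ ∑ c ∈ C, ∑ c' ∈ C, P k ⟪c, c'⟫)
    (m : ℕ → ℕ) (hm : ∀ k ≤ d, 1 ≤ m k)
    (S : (k : ℕ) → ℝ → ℝ → ℝ → Matrix (Fin (m k)) (Fin (m k)) ℝ)
    (hSsymm : ∀ k ≤ d, ∀ u v t : ℝ, (S k u v t).IsSymm)
    (hSperm : ∀ k ≤ d, ∀ u v t : ℝ,
      S k u v t = S k u t v ∧ S k u v t = S k v u t ∧ S k u v t = S k v t u ∧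
      S k u v t = S k t u v ∧ S k u v t = S k t v u)
    (hSpos : ∀ k ≤ d, ∀ C : Finset (EuclideanSpace ℝ (Fin n)),
      (∀ c ∈ C, ⟪c, c⟫ = (1 : ℝ)) →
      Matrix.PosSemidef (∑ c ∈ C, ∑ c' ∈ C, ∑ c'' ∈ C, S k ⟪c, c'⟫ ⟪c, c''⟫ ⟪c', c''⟫))
    (hS111 : ∀ k, 1 ≤ k → k ≤ d → S k 1 1 1 = 0)
    (b11 b12 b22 : ℝ) (hb : Matrix.PosSemidef !![b11, b12; b12, b22])
    (a : ℕ → ℝ) (ha : ∀ k, 1 ≤ k → k ≤ d → 0 ≤ a k)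
    (F : (k : ℕ) → Matrix (Fin (m k)) (Fin (m k)) ℝ)
    (hF : ∀ k ≤ d, (F k).PosSemidef)
    (hcond1 : ∀ u : ℝ, -1 ≤ u → u ≤ Real.cos θ →
      ∑ k ∈ Finset.Icc 1 d, a k * P k u + 2 * b12 + b22 +
        3 * ∑ k ∈ Finset.range (d + 1), (F k * S k u u 1).trace ≤ -1)
    (hcond2 : ∀ u v t : ℝ,
      -1 ≤ u → u ≤ Real.cos θ → -1 ≤ v → v ≤ Real.cos θ → -1 ≤ t → t ≤ Real.cos θ →
      0 ≤ 1 + 2 * u * v * t - u ^ 2 - v ^ 2 - t ^ 2 →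
      b22 + ∑ k ∈ Finset.range (d + 1), (F k * S k u v t).trace ≤ 0)
    (C : Finset (EuclideanSpace ℝ (Fin n)))
    (hC : ∀ c ∈ C, ⟪c, c⟫ = (1 : ℝ))
    (hcode : ∀ c ∈ C, ∀ c' ∈ C, c ≠ c' → ⟪c, c'⟫ ≤ Real.cos θ) :
    (C.card : ℝ) ≤ 1 + ∑ k ∈ Finset.Icc 1 d, a k + b11 + (F 0 * S 0 1 1 1).trace := by
  classical
  -- abbreviations
  set p : ℝ → ℝ := fun u => ∑ k ∈ Finset.Icc 1 d, a k * P k u with hp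
  set s : ℝ → ℝ → ℝ → ℝ := fun u v t => ∑ k ∈ Finset.range (d + 1), (F k * S k u v t).trace
    with hsdef
  -- quadratic form positivity of b
  have hquad : ∀ x : ℝ, 0 ≤ b11 + 2 * b12 * x + b22 * x ^ 2 := by
    intro x
    have h := hb.dotProduct_mulVec_nonneg ![1, x]
    simp only [dotProduct, Matrix.mulVec, Fin.sum_univ_two, Matrix.cons_val',
      Matrix.cons_val_zero, Matrix.cons_val_one, Matrix.head_cons, Matrix.head_fin_const,
      Matrix.empty_val', Matrix.cons_val_fin_one, Pi.star_apply, star_trivial,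
      RCLike.star_def, map_one, Matrix.of_apply] at h
    nlinarith only [h]
  have hb11 : 0 ≤ b11 := by have h0 := hquad 0; nlinarith only [h0]
  -- sum of a is nonneg
  have hsa : 0 ≤ ∑ k ∈ Finset.Icc 1 d, a k :=
    Finset.sum_nonneg fun k hk => ha k (Finset.mem_Icc.mp hk).1 (Finset.mem_Icc.mp hk).2
  -- trace term nonneg
  have hT0 : 0 ≤ (F 0 * S 0 1 1 1).trace := by
    have hpos : (S 0 1 1 1).PosSemidef := by
      set e : EuclideanSpace ℝ (Fin n) := EuclideanSpace.single ⟨0, by omega⟩ 1 with he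
      have heu : ⟪e, e⟫ = (1:ℝ) := by
        rw [he]
        simp [EuclideanSpace.inner_single_left]
      have h := hSpos 0 (Nat.zero_le d) {e} (by intro c hc; rw [Finset.mem_singleton] at hc; rw [hc]; exact heu)
      simp only [Finset.sum_singleton] at h
      rwa [heu] at h
    exact sdp_trace_mul_nonneg (hF 0 (Nat.zero_le d)) hpos
  -- degenerate small cases
  rcases Nat.lt_or_ge C.card 2 with hN2 | hN2
  · have : (C.card : ℝ) ≤ 1 := by exact_mod_cast Nat.lt_succ_iff.mp hN2
    linarith
  -- main case
  -- unit norms and inner product bounds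
  have hlow : ∀ c ∈ C, ∀ c' ∈ C, -1 ≤ ⟪c, c'⟫ := by
    intro c hc c' hc'
    have hnc : ‖c‖ = 1 := by
      have h := hC c hc; rw [real_inner_self_eq_norm_mul_norm] at h
      nlinarith only [h, norm_nonneg c]
    have hnc' : ‖c'‖ = 1 := by
      have h := hC c' hc'; rw [real_inner_self_eq_norm_mul_norm] at h
      nlinarith only [h, norm_nonneg c']
    have h := abs_real_inner_le_norm c c'
    rw [hnc, hnc', one_mul] at h
    linarith only [(abs_le.mp h).1]
  -- permutation invariance of s
  have hsp1 : ∀ u v t : ℝ, s u v t = s v t u := by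
    intro u v t
    exact Finset.sum_congr rfl fun k hk => by
      rw [(hSperm k (Nat.lt_succ_iff.mp (Finset.mem_range.mp hk)) u v t).2.2.1]
  have hsp2 : ∀ u v t : ℝ, s u v t = s u t v := by
    intro u v t
    exact Finset.sum_congr rfl fun k hk => by
      rw [(hSperm k (Nat.lt_succ_iff.mp (Finset.mem_range.mp hk)) u v t).1]
  have hs111 : s 1 1 1 = (F 0 * S 0 1 1 1).trace := by
    rw [hsdef]
    refine Finset.sum_eq_single_of_mem 0 (Finset.mem_range.mpr (by omega)) ?_
    intro k hk hk0
    rw [hS111 k (Nat.one_le_iff_ne_zero.mpr hk0) (Nat.lt_succ_iff.mp (Finset.mem_range.mp hk))]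
    simp
  have hp1 : p 1 = ∑ k ∈ Finset.Icc 1 d, a k := by
    rw [hp]
    exact Finset.sum_congr rfl fun k hk => by
      rw [hP1 k (Finset.mem_Icc.mp hk).1 (Finset.mem_Icc.mp hk).2, mul_one]
  -- two-point positivity
  have hA : 0 ≤ ∑ c ∈ C, ∑ c' ∈ C, p ⟪c, c'⟫ := by
    have e1 : ∑ c ∈ C, ∑ c' ∈ C, p ⟪c, c'⟫
        = ∑ k ∈ Finset.Icc 1 d, a k * ∑ c ∈ C, ∑ c' ∈ C, P k ⟪c, c'⟫ := by
      simp only [hp, Finset.mul_sum]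
      calc ∑ c ∈ C, ∑ c' ∈ C, ∑ k ∈ Finset.Icc 1 d, a k * P k ⟪c, c'⟫
          = ∑ c ∈ C, ∑ k ∈ Finset.Icc 1 d, ∑ c' ∈ C, a k * P k ⟪c, c'⟫ :=
            Finset.sum_congr rfl fun c _ => Finset.sum_comm
        _ = ∑ k ∈ Finset.Icc 1 d, ∑ c ∈ C, ∑ c' ∈ C, a k * P k ⟪c, c'⟫ := Finset.sum_comm
    rw [e1]
    exact Finset.sum_nonneg fun k hk =>
      mul_nonneg (ha k (Finset.mem_Icc.mp hk).1 (Finset.mem_Icc.mp hk).2)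
        (hPpos k (Finset.mem_Icc.mp hk).1 (Finset.mem_Icc.mp hk).2 C hC)
  -- three-point positivity
  have hG : 0 ≤ ∑ c ∈ C, ∑ c' ∈ C, ∑ c'' ∈ C, s ⟪c, c'⟫ ⟪c, c''⟫ ⟪c', c''⟫ := by
    have e1 : ∑ c ∈ C, ∑ c' ∈ C, ∑ c'' ∈ C, s ⟪c, c'⟫ ⟪c, c''⟫ ⟪c', c''⟫
        = ∑ k ∈ Finset.range (d + 1),
            (F k * ∑ c ∈ C, ∑ c' ∈ C, ∑ c'' ∈ C, S k ⟪c, c'⟫ ⟪c, c''⟫ ⟪c', c''⟫).trace := by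
      simp only [hsdef, Matrix.mul_sum, Matrix.trace_sum]
      calc ∑ c ∈ C, ∑ c' ∈ C, ∑ c'' ∈ C, ∑ k ∈ Finset.range (d + 1),
              (F k * S k ⟪c, c'⟫ ⟪c, c''⟫ ⟪c', c''⟫).trace
          = ∑ c ∈ C, ∑ c' ∈ C, ∑ k ∈ Finset.range (d + 1), ∑ c'' ∈ C,
              (F k * S k ⟪c, c'⟫ ⟪c, c''⟫ ⟪c', c''⟫).trace :=
            Finset.sum_congr rfl fun c _ => Finset.sum_congr rfl fun c' _ => Finset.sum_comm
        _ = ∑ c ∈ C, ∑ k ∈ Finset.range (d + 1), ∑ c' ∈ C, ∑ c'' ∈ C,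
              (F k * S k ⟪c, c'⟫ ⟪c, c''⟫ ⟪c', c''⟫).trace :=
            Finset.sum_congr rfl fun c _ => Finset.sum_comm
        _ = ∑ k ∈ Finset.range (d + 1), ∑ c ∈ C, ∑ c' ∈ C, ∑ c'' ∈ C,
              (F k * S k ⟪c, c'⟫ ⟪c, c''⟫ ⟪c', c''⟫).trace := Finset.sum_comm
    rw [e1]
    exact Finset.sum_nonneg fun k hk =>
      sdp_trace_mul_nonneg (hF k (Nat.lt_succ_iff.mp (Finset.mem_range.mp hk)))
        (hSpos k (Nat.lt_succ_iff.mp (Finset.mem_range.mp hk)) C hC)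
  -- split the pair sum
  have hpair : ∑ c ∈ C, ∑ c' ∈ C, p ⟪c, c'⟫
      = (C.card : ℝ) * (∑ k ∈ Finset.Icc 1 d, a k)
        + ∑ c ∈ C, ∑ c' ∈ C.erase c, p ⟪c, c'⟫ := by
    have step : ∀ c ∈ C, ∑ c' ∈ C, p ⟪c, c'⟫
        = (∑ k ∈ Finset.Icc 1 d, a k) + ∑ c' ∈ C.erase c, p ⟪c, c'⟫ := by
      intro c hc
      rw [← Finset.add_sum_erase C _ hc, hC c hc, hp1]
    rw [Finset.sum_congr rfl step, Finset.sum_add_distrib, Finset.sum_const, nsmul_eq_mul]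
  -- split the triple sum
  have htriple : ∑ c ∈ C, ∑ c' ∈ C, ∑ c'' ∈ C, s ⟪c, c'⟫ ⟪c, c''⟫ ⟪c', c''⟫
      = (C.card : ℝ) * s 1 1 1
        + ∑ c ∈ C, ∑ c' ∈ C.erase c,
            (3 * s ⟪c, c'⟫ ⟪c, c'⟫ 1
              + ∑ c'' ∈ (C.erase c).erase c', s ⟪c, c'⟫ ⟪c, c''⟫ ⟪c', c''⟫) := by
    have step : ∀ c ∈ C, ∑ c' ∈ C, ∑ c'' ∈ C, s ⟪c, c'⟫ ⟪c, c''⟫ ⟪c', c''⟫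
        = s 1 1 1 + ∑ c' ∈ C.erase c,
            (3 * s ⟪c, c'⟫ ⟪c, c'⟫ 1
              + ∑ c'' ∈ (C.erase c).erase c', s ⟪c, c'⟫ ⟪c, c''⟫ ⟪c', c''⟫) := by
      intro c hc
      rw [← Finset.add_sum_erase C _ hc]
      -- diagonal part (c' = c)
      have hdiag : ∑ c'' ∈ C, s ⟪c, c⟫ ⟪c, c''⟫ ⟪c, c''⟫
          = s 1 1 1 + ∑ c'' ∈ C.erase c, s ⟪c, c''⟫ ⟪c, c''⟫ 1 := by
        rw [← Finset.add_sum_erase C _ hc, hC c hc]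
        congr 1
        exact Finset.sum_congr rfl fun c'' _ => by rw [hsp1 1 ⟪c, c''⟫ ⟪c, c''⟫]
      -- off-diagonal parts
      have hoff : ∀ c' ∈ C.erase c, ∑ c'' ∈ C, s ⟪c, c'⟫ ⟪c, c''⟫ ⟪c', c''⟫
          = 2 * s ⟪c, c'⟫ ⟪c, c'⟫ 1 + ∑ c'' ∈ (C.erase c).erase c', s ⟪c, c'⟫ ⟪c, c''⟫ ⟪c', c''⟫ := by
        intro c' hc'
        have hc'C : c' ∈ C := Finset.mem_of_mem_erase hc'
        have hc'ne : c' ≠ c := (Finset.mem_erase.mp hc').1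
        rw [← Finset.add_sum_erase C _ hc, ← Finset.add_sum_erase (C.erase c) _
          (Finset.mem_erase.mpr ⟨hc'ne, hc'C⟩)]
        beta_reduce
        rw [hC c hc, hC c' hc'C, real_inner_comm c c']
        rw [hsp2 ⟪c, c'⟫ 1 ⟪c, c'⟫]
        ring
      rw [hdiag, Finset.sum_congr rfl hoff, Finset.sum_add_distrib, Finset.sum_add_distrib]
      have h3 : ∑ c' ∈ C.erase c, 3 * s ⟪c, c'⟫ ⟪c, c'⟫ 1
          = ∑ c' ∈ C.erase c, s ⟪c, c'⟫ ⟪c, c'⟫ 1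
            + ∑ c' ∈ C.erase c, 2 * s ⟪c, c'⟫ ⟪c, c'⟫ 1 := by
        rw [← Finset.sum_add_distrib]
        exact Finset.sum_congr rfl fun _ _ => by ring
      rw [h3]
      ring
    rw [Finset.sum_congr rfl step, Finset.sum_add_distrib, Finset.sum_const, nsmul_eq_mul]
  -- bound off-diagonal pair contributions via condition 1
  have hbound1 : (∑ c ∈ C, ∑ c' ∈ C.erase c, p ⟪c, c'⟫)
      + ∑ c ∈ C, ∑ c' ∈ C.erase c, 3 * s ⟪c, c'⟫ ⟪c, c'⟫ 1
      ≤ (C.card : ℝ) * ((C.card : ℝ) - 1) * (-1 - 2 * b12 - b22) := by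
    have h1 : ∀ c ∈ C, ∀ c' ∈ C.erase c,
        p ⟪c, c'⟫ + 3 * s ⟪c, c'⟫ ⟪c, c'⟫ 1 ≤ -1 - 2 * b12 - b22 := by
      intro c hc c' hc'
      have hc'C : c' ∈ C := Finset.mem_of_mem_erase hc'
      have hne : c ≠ c' := fun h => (Finset.mem_erase.mp hc').1 h.symm
      have h := hcond1 ⟪c, c'⟫ (hlow c hc c' hc'C) (hcode c hc c' hc'C hne)
      linarith only [h]
    calc (∑ c ∈ C, ∑ c' ∈ C.erase c, p ⟪c, c'⟫)
          + ∑ c ∈ C, ∑ c' ∈ C.erase c, 3 * s ⟪c, c'⟫ ⟪c, c'⟫ 1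
        = ∑ c ∈ C, ∑ c' ∈ C.erase c, (p ⟪c, c'⟫ + 3 * s ⟪c, c'⟫ ⟪c, c'⟫ 1) := by
          rw [← Finset.sum_add_distrib]
          exact Finset.sum_congr rfl fun c _ => Finset.sum_add_distrib.symm
      _ ≤ ∑ c ∈ C, ∑ c' ∈ C.erase c, (-1 - 2 * b12 - b22) :=
          Finset.sum_le_sum fun c hc => Finset.sum_le_sum fun c' hc' => h1 c hc c' hc'
      _ = (C.card : ℝ) * ((C.card : ℝ) - 1) * (-1 - 2 * b12 - b22) := by
          have h2 : ∀ c ∈ C, ∑ c' ∈ C.erase c, (-1 - 2 * b12 - b22 : ℝ)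
              = ((C.card : ℝ) - 1) * (-1 - 2 * b12 - b22) := by
            intro c hc
            rw [Finset.sum_const, Finset.card_erase_of_mem hc, nsmul_eq_mul,
              Nat.cast_sub (by omega), Nat.cast_one]
          rw [Finset.sum_congr rfl h2, Finset.sum_const, nsmul_eq_mul]
          ring
  -- bound distinct-triple contributions via condition 2
  have hbound2 : ∑ c ∈ C, ∑ c' ∈ C.erase c, ∑ c'' ∈ (C.erase c).erase c',
        s ⟪c, c'⟫ ⟪c, c''⟫ ⟪c', c''⟫
      ≤ (C.card : ℝ) * ((C.card : ℝ) - 1) * ((C.card : ℝ) - 2) * (-b22) := by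
    have h1 : ∀ c ∈ C, ∀ c' ∈ C.erase c, ∀ c'' ∈ (C.erase c).erase c',
        s ⟪c, c'⟫ ⟪c, c''⟫ ⟪c', c''⟫ ≤ -b22 := by
      intro c hc c' hc' c'' hc''
      have hc'C : c' ∈ C := Finset.mem_of_mem_erase hc'
      have hc''E : c'' ∈ C.erase c := Finset.mem_of_mem_erase hc''
      have hc''C : c'' ∈ C := Finset.mem_of_mem_erase hc''E
      have hne1 : c ≠ c' := fun h => (Finset.mem_erase.mp hc').1 h.symm
      have hne2 : c ≠ c'' := fun h => (Finset.mem_erase.mp hc''E).1 h.symm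
      have hne3 : c' ≠ c'' := fun h => (Finset.mem_erase.mp hc'').1 h.symm
      have h := hcond2 ⟪c, c'⟫ ⟪c, c''⟫ ⟪c', c''⟫
        (hlow c hc c' hc'C) (hcode c hc c' hc'C hne1)
        (hlow c hc c'' hc''C) (hcode c hc c'' hc''C hne2)
        (hlow c' hc'C c'' hc''C) (hcode c' hc'C c'' hc''C hne3)
        (sdp_gram3_nonneg (hC c hc) (hC c' hc'C) (hC c'' hc''C))
      linarith only [h]
    calc ∑ c ∈ C, ∑ c' ∈ C.erase c, ∑ c'' ∈ (C.erase c).erase c',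
            s ⟪c, c'⟫ ⟪c, c''⟫ ⟪c', c''⟫
        ≤ ∑ c ∈ C, ∑ c' ∈ C.erase c, ∑ c'' ∈ (C.erase c).erase c', (-b22) :=
          Finset.sum_le_sum fun c hc => Finset.sum_le_sum fun c' hc' =>
            Finset.sum_le_sum fun c'' hc'' => h1 c hc c' hc' c'' hc''
      _ = (C.card : ℝ) * ((C.card : ℝ) - 1) * ((C.card : ℝ) - 2) * (-b22) := by
          have h2 : ∀ c ∈ C, ∀ c' ∈ C.erase c,
              ∑ c'' ∈ (C.erase c).erase c', (-b22 : ℝ) = ((C.card : ℝ) - 2) * (-b22) := by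
            intro c hc c' hc'
            rw [Finset.sum_const, Finset.card_erase_of_mem hc',
              Finset.card_erase_of_mem hc, nsmul_eq_mul,
              Nat.cast_sub (by omega), Nat.cast_sub (by omega), Nat.cast_one]
            push_cast
            ring
          have h3 : ∀ c ∈ C, ∑ c' ∈ C.erase c,
              (∑ c'' ∈ (C.erase c).erase c', (-b22 : ℝ))
              = ((C.card : ℝ) - 1) * (((C.card : ℝ) - 2) * (-b22)) := by
            intro c hc
            rw [Finset.sum_congr rfl (h2 c hc), Finset.sum_const,
              Finset.card_erase_of_mem hc, nsmul_eq_mul,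
              Nat.cast_sub (by omega), Nat.cast_one]
          rw [Finset.sum_congr rfl h3, Finset.sum_const, nsmul_eq_mul]
          ring
  -- assemble everything
  rw [hpair] at hA
  rw [htriple, hs111] at hG
  have hGsplit : ∑ c ∈ C, ∑ c' ∈ C.erase c,
        (3 * s ⟪c, c'⟫ ⟪c, c'⟫ 1
          + ∑ c'' ∈ (C.erase c).erase c', s ⟪c, c'⟫ ⟪c, c''⟫ ⟪c', c''⟫)
      = (∑ c ∈ C, ∑ c' ∈ C.erase c, 3 * s ⟪c, c'⟫ ⟪c, c'⟫ 1)
        + ∑ c ∈ C, ∑ c' ∈ C.erase c, ∑ c'' ∈ (C.erase c).erase c',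
            s ⟪c, c'⟫ ⟪c, c''⟫ ⟪c', c''⟫ := by
    rw [← Finset.sum_add_distrib]
    exact Finset.sum_congr rfl fun c _ => Finset.sum_add_distrib
  rw [hGsplit] at hG
  have hx2 : (2 : ℝ) ≤ (C.card : ℝ) := by exact_mod_cast hN2
  have hq := hquad ((C.card : ℝ) - 1)
  nlinarith only [hA, hG, hbound1, hbound2, hx2,
    mul_nonneg (Nat.cast_nonneg C.card : (0:ℝ) ≤ (C.card : ℝ)) hq]
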